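/- Let F be a field of characteristic p > 0 and G a finite abelian group with G = P × H, where P is the Sylow p-subgroup of G and H has order coprime to p. Then every idempotent of the group algebra FG lies in the subalgebra FH. -/

import Mathlib

section Aux

variable (p : ℕ) [Fact p.Prime] {F : Type*} [Field F] [CharP F p]
  {G : Type*} [CommGroup G]

private theorem ma_pow_p (x : MonoidAlgebra F G) :
    ∃ y : MonoidAlgebra F G, x ^ p = MonoidAlgebra.mapDomain (· ^ p) y := by
  haveI : CharP (MonoidAlgebra F G) p :=
    charP_of_injective_algebraMap' F (A := MonoidAlgebra F G) p
  induction x using MonoidAlgebra.induction with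
  | zero =>
      exact ⟨0, by simp [zero_pow (Fact.out : p.Prime).ne_zero]⟩
  | single_add a b f ha hb ih =>
      obtain ⟨y, hy⟩ := ih
      refine ⟨MonoidAlgebra.single a (b ^ p) + y, ?_⟩
      rw [MonoidAlgebra.mapDomain_add, ← hy, add_pow_char, MonoidAlgebra.single_pow,
        MonoidAlgebra.mapDomain_single]

private theorem ma_pow_pk (k : ℕ) (x : MonoidAlgebra F G) :
    ∃ y : MonoidAlgebra F G, x ^ p ^ k = MonoidAlgebra.mapDomain (· ^ p ^ k) y := by
  induction k with
  | zero =>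
      refine ⟨x, ?_⟩
      rw [pow_zero, pow_one, show ((· ^ (1 : ℕ)) : G → G) = id from funext fun a => pow_one a,
        ]
      ext : 1; simp
  | succ k ih =>
      obtain ⟨y, hy⟩ := ih
      obtain ⟨z, hz⟩ := ma_pow_p p y
      refine ⟨z, ?_⟩
      have h1 : x ^ p ^ (k + 1) = (x ^ p ^ k) ^ p := by rw [← pow_mul, ← pow_succ]
      have h2 : MonoidAlgebra.mapDomain ((· ^ p ^ k) : G → G) y
          = MonoidAlgebra.mapDomainRingHom F ((powMonoidHom (p ^ k) : G →* G)) y := rfl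
      rw [h1, hy, h2, ← map_pow, hz, show (MonoidAlgebra.mapDomainRingHom F
          ((powMonoidHom (p ^ k) : G →* G))) (MonoidAlgebra.mapDomain (· ^ p) z)
          = MonoidAlgebra.mapDomain ((· ^ p ^ k) : G → G) (MonoidAlgebra.mapDomain (· ^ p) z) from rfl]
      ext : 1
      simp only [MonoidAlgebra.coeff_mapDomain, ← Finsupp.mapDomain_comp]
      congr 1
      funext a
      simp only [Function.comp_apply, ← pow_mul, ← pow_succ']

end Aux

/-- Let `F` be a field of characteristic `p > 0` and `G = P × H` a finite abelian group,
where `P` is the Sylow `p`-subgroup and `H` has order coprime to `p`. Then every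
idempotent of `FG` lies in the subalgebra `FH`, i.e., its coefficients vanish outside
`{1} × H`. -/
theorem idempotents_lie_in_FH
    (p : ℕ) [Fact p.Prime] (F : Type*) [Field F] [CharP F p]
    (P H : Type*) [CommGroup P] [CommGroup H] [Finite P] [Finite H]
    (hP : IsPGroup p P) (hH : Nat.Coprime p (Nat.card H))
    (e : MonoidAlgebra F (P × H)) (he : IsIdempotentElem e) :
    ∀ g : P × H, g.1 ≠ 1 → e.coeff g = 0 := by
  intro g hg
  obtain ⟨k, hk⟩ := hP.exists_card_eq
  have hPk : ∀ x : P, x ^ p ^ k = 1 := fun x => by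
    rw [← hk]; exact pow_card_eq_one'
  have hek : e ^ p ^ k = e := by
    obtain ⟨n, hn⟩ := Nat.exists_eq_succ_of_ne_zero
      (pow_ne_zero k (Fact.out : p.Prime).ne_zero)
    rw [hn, he.pow_succ_eq]
  obtain ⟨y, hy⟩ := ma_pow_pk p (F := F) (G := P × H) k e
  rw [hek] at hy
  rw [hy, MonoidAlgebra.coeff_mapDomain]
  apply Finsupp.mapDomain_notin_range
  rintro ⟨x, hx⟩
  apply hg
  rw [← hx, Prod.pow_fst, hPk]
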